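/- Let G be a finite simple non-complete graph and let ≺ be a linear ordering of its vertices satisfying the LexBFS property (for all a, b, c with c ≺ b ≺ a, ca an edge and cb not an edge, there exists d ≺ c with db an edge and da not an edge). Let z be the last vertex of the ordering. Then there exists a connected component C of G − N[z] such that for every neighbor x of z, either N[x] = N[z] or x has a neighbor in C. -/

import Mathlib

/-- Berry–Bordat: if `G` is a non-complete graph with a LexBFS ordering
(last vertex `z`), then there is a connected component `C` of `G − N[z]` such that every
neighbor `x` of `z` satisfies `N[x] = N[z]` or has a neighbor in `C`. -/
theorem stmt_1 {V : Type*} [Fintype V] [LinearOrder V] (G : SimpleGraph V)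
    (hnc : ∃ u v : V, u ≠ v ∧ ¬ G.Adj u v)
    (hlex : ∀ a b c : V, c < b → b < a → G.Adj c a → ¬ G.Adj c b →
      ∃ d : V, d < c ∧ G.Adj d b ∧ ¬ G.Adj d a)
    (z : V) (hz : ∀ w : V, w ≤ z) :
    ∃ C : (G.induce {w : V | ¬ (w = z ∨ G.Adj z w)}).ConnectedComponent,
      ∀ x : V, G.Adj z x →
        ({w : V | w = x ∨ G.Adj x w} = {w : V | w = z ∨ G.Adj z w}) ∨
        ∃ w : {w : V | ¬ (w = z ∨ G.Adj z w)},
          (G.induce {w : V | ¬ (w = z ∨ G.Adj z w)}).connectedComponentMk w = C ∧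
          G.Adj x ↑w := by
  classical
  set S : Set V := {w : V | ¬ (w = z ∨ G.Adj z w)} with hSdef
  have hmemS : ∀ {w : V}, w ∈ S ↔ (w ≠ z ∧ ¬ G.Adj z w) := by
    intro w; simp [hSdef, not_or]
  have hSlt : ∀ {w : V}, w ∈ S → w < z := by
    intro w hw; exact lt_of_le_of_ne (hz w) (hmemS.mp hw).1
  have hltz : ∀ {w : V}, w < z → w ≠ z := fun h => ne_of_lt h
  have hmkS : ∀ {w : V}, w < z → ¬ G.Adj w z → w ∈ S := by
    intro w h1 h2; exact hmemS.mpr ⟨ne_of_lt h1, fun h => h2 h.symm⟩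
  -- S is nonempty
  have hSne : ∃ u, u ∈ S := by
    obtain ⟨u, v, huv, hnadj⟩ := hnc
    rcases eq_or_ne u z with rfl | huz
    · exact ⟨v, hmemS.mpr ⟨huv.symm, hnadj⟩⟩
    rcases eq_or_ne v z with rfl | hvz
    · exact ⟨u, hmemS.mpr ⟨huz, fun h => hnadj h.symm⟩⟩
    by_cases huS : u ∈ S
    · exact ⟨u, huS⟩
    by_cases hvS : v ∈ S
    · exact ⟨v, hvS⟩
    have hu : G.Adj u z := by
      by_contra h; exact huS (hmemS.mpr ⟨huz, fun h' => h h'.symm⟩)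
    have hv : G.Adj v z := by
      by_contra h; exact hvS (hmemS.mpr ⟨hvz, fun h' => h h'.symm⟩)
    rcases huv.lt_or_gt with hlt | hlt
    · obtain ⟨d, hd1, hd2, hd3⟩ := hlex z v u hlt (lt_of_le_of_ne (hz v) hvz) hu hnadj
      exact ⟨d, hmkS (hd1.trans (hlt.trans (lt_of_le_of_ne (hz v) hvz))) hd3⟩
    · obtain ⟨d, hd1, hd2, hd3⟩ := hlex z u v hlt (lt_of_le_of_ne (hz u) huz)
        hv (fun h => hnadj h.symm)
      exact ⟨d, hmkS (hd1.trans (hlt.trans (lt_of_le_of_ne (hz u) huz))) hd3⟩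
  -- y : the maximum of S
  obtain ⟨y, hyS, hymax'⟩ := Set.Finite.exists_maximalFor id S (Set.toFinite S) hSne
  have hymax : ∀ {v : V}, v ∈ S → v ≤ y := by
    intro v hv
    by_contra h
    push_neg at h
    exact absurd (hymax' hv h.le) (not_le.mpr h)
  have hyz : y < z := hSlt hyS
  -- the component (as a set) of y
  set Cs : Set V := {v : V | ∃ h : v ∈ S, (G.induce S).Reachable ⟨v, h⟩ ⟨y, hyS⟩}
    with hCdef
  have hCS : ∀ {v : V}, v ∈ Cs → v ∈ S := fun hv => hv.1
  have hyC : y ∈ Cs := ⟨hyS, SimpleGraph.Reachable.refl _⟩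
  have hCadj : ∀ {u v : V}, u ∈ Cs → v ∈ S → G.Adj u v → v ∈ Cs := by
    intro u v hu hv h
    obtain ⟨hu', hr⟩ := hu
    exact ⟨hv, SimpleGraph.Reachable.trans
      (SimpleGraph.Adj.reachable (show (G.induce S).Adj ⟨v, hv⟩ ⟨u, hu'⟩ from h.symm)) hr⟩
  have wf : WellFounded ((· < ·) : V → V → Prop) := wellFounded_lt
  -- The master descent lemma L : no vertex satisfies P
  set P : V → Prop := fun v =>
    (v ∈ S ∧ v ∉ Cs ∧ ∃ c w : V, c ∈ Cs ∧ w ∈ S ∧ w ∉ Cs ∧ v < c ∧ c < w ∧ G.Adj v w)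
    ∨ (v ∈ Cs ∧ ∃ b a : V, b ∈ S ∧ b ∉ Cs ∧ a ∈ Cs ∧ v < b ∧ b < a ∧ G.Adj v a)
    with hPdef
  have L : ∀ v : V, ¬ P v := by
    intro v
    induction v using wf.induction with
    | _ v ih =>
    intro hP
    rcases hP with ⟨hvS, hvnC, c, w, hcC, hwS, hwnC, hvc, hcw, hvw⟩ |
      ⟨hvC, b, a, hbS, hbnC, haC, hvb, hba, hva⟩
    · -- shape T1
      have hnvc : ¬ G.Adj v c := fun h => hvnC (hCadj hcC hvS h.symm)
      obtain ⟨j, hjv, hjc, hjw⟩ := hlex w c v hvc hcw hvw hnvc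
      by_cases hjS : j ∈ S
      · have hjC : j ∈ Cs := hCadj hcC hjS hjc.symm
        exact ih j hjv (Or.inr ⟨hjC, v, c, hvS, hvnC, hcC, hjv, hvc, hjc⟩)
      · have hjz : G.Adj z j := by
          by_contra h
          exact hjS (hmemS.mpr ⟨ne_of_lt (hjv.trans (hvc.trans (hcw.trans (hSlt hwS)))), h⟩)
        obtain ⟨k, hkj, hkw, hkz⟩ := hlex z w j (hjv.trans (hvc.trans hcw)) (hSlt hwS)
          hjz.symm hjw
        have hkS : k ∈ S := hmkS
          (hkj.trans (hjv.trans (hvc.trans (hcw.trans (hSlt hwS))))) hkz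
        have hknC : k ∉ Cs := fun h => hwnC (hCadj h hwS hkw)
        exact ih k (hkj.trans hjv)
          (Or.inl ⟨hkS, hknC, c, w, hcC, hwS, hwnC,
            hkj.trans (hjv.trans hvc), hcw, hkw⟩)
    · -- shape T2
      have hnvb : ¬ G.Adj v b := fun h => hbnC (hCadj hvC hbS h)
      obtain ⟨p, hpv, hpb, hpa⟩ := hlex a b v hvb hba hva hnvb
      by_cases hpS : p ∈ S
      · have hpnC : p ∉ Cs := fun h => hbnC (hCadj h hbS hpb)
        exact ih p hpv (Or.inl ⟨hpS, hpnC, v, b, hvC, hbS, hbnC, hpv, hvb, hpb⟩)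
      · have hpz : G.Adj z p := by
          by_contra h
          exact hpS (hmemS.mpr ⟨ne_of_lt (hpv.trans (hSlt (hCS hvC))), h⟩)
        obtain ⟨q, hqp, hqa, hqz⟩ := hlex z a p (hpv.trans (hvb.trans hba))
          (hSlt (hCS haC)) hpz.symm hpa
        have hqS : q ∈ S := hmkS (hqp.trans (hpv.trans (hSlt (hCS hvC)))) hqz
        have hqC : q ∈ Cs := hCadj haC hqS hqa.symm
        exact ih q (hqp.trans hpv)
          (Or.inr ⟨hqC, b, a, hbS, hbnC, haC, hqp.trans (hpv.trans hvb), hba, hqa⟩)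
  -- Claim A : every neighbor of z with a neighbor in S has a neighbor in Cs
  have claimA : ∀ x : V, G.Adj z x → (∃ t ∈ S, G.Adj x t) → ∃ c ∈ Cs, G.Adj x c := by
    intro x hzx hex
    by_contra hno
    push_neg at hno
    obtain ⟨t0, ht0S, hxt0⟩ := hex
    have ht0nC : t0 ∉ Cs := fun h => hno t0 h hxt0
    have hxny : ¬ G.Adj x y := fun h => hno y hyC h
    have hxz : x < z := lt_of_le_of_ne (hz x) (fun h => (G.ne_of_adj hzx) h.symm)
    have hxnS : x ∉ S := fun h => (hmemS.mp h).2 hzx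
    have hxyne : x ≠ y := fun h => hxnS (h ▸ hyS)
    rcases hxyne.lt_or_gt with hxy | hyx
    · -- Case x < y
      obtain ⟨d, hdx, hdy, hdz⟩ := hlex z y x hxy hyz hzx.symm hxny
      have hdS : d ∈ S := hmkS (hdx.trans (hxy.trans hyz)) hdz
      have hdC : d ∈ Cs := hCadj hyC hdS hdy.symm
      have hndx : ¬ G.Adj d x := fun h => hno d hdC h.symm
      obtain ⟨e, hed, hex', heny⟩ := hlex y x d hdx hxy hdy hndx
      -- descent predicate R
      set R : V → Prop := fun v =>
        v < d ∧ ((v ∈ S ∧ G.Adj x v) ∨ (G.Adj z v ∧ ¬ G.Adj v y)) with hRdef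
      have hR : ∀ v : V, ¬ R v := by
        intro v
        induction v using wf.induction with
        | _ v ihr =>
        intro hRv
        rcases hRv with ⟨hvd, ⟨hvS, hxv⟩ | ⟨hzv, hvny⟩⟩
        · -- R1
          have hvnC : v ∉ Cs := fun h => hno v h hxv
          have hnvd : ¬ G.Adj v d := fun h => hvnC (hCadj hdC hvS h.symm)
          obtain ⟨f, hfv, hfd, hfx⟩ := hlex x d v hvd hdx hxv.symm hnvd
          by_cases hfS : f ∈ S
          · have hfC : f ∈ Cs := hCadj hdC hfS hfd.symm
            exact L f (Or.inr ⟨hfC, v, d, hvS, hvnC, hdC, hfv, hvd, hfd⟩)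
          · have hfz : G.Adj z f := by
              by_contra h
              exact hfS (hmemS.mpr ⟨ne_of_lt (hfv.trans (hvd.trans (hdx.trans hxz))), h⟩)
            obtain ⟨g, hgf, hgx, hgz⟩ := hlex z x f (hfv.trans hvd |>.trans hdx) hxz
              hfz.symm hfx
            have hgS : g ∈ S := hmkS
              (hgf.trans ((hfv.trans hvd).trans (hdx.trans hxz))) hgz
            exact ihr g (hgf.trans hfv)
              ⟨hgf.trans (hfv.trans hvd), Or.inl ⟨hgS, hgx.symm⟩⟩
        · -- R2
          have hvy : v < y := hvd.trans (hdx.trans hxy)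
          obtain ⟨f, hfv, hfy, hfz⟩ := hlex z y v hvy hyz hzv.symm hvny
          have hfS : f ∈ S := hmkS (hfv.trans (hvy.trans hyz)) hfz
          have hfC : f ∈ Cs := hCadj hyC hfS hfy.symm
          have hnfx : ¬ G.Adj f x := fun h => hno f hfC h.symm
          obtain ⟨e', he'f, he'x, he'y⟩ := hlex y x f (hfv.trans hvd |>.trans hdx) hxy
            hfy hnfx
          by_cases he'S : e' ∈ S
          · exact ihr e' (he'f.trans hfv)
              ⟨he'f.trans (hfv.trans hvd), Or.inl ⟨he'S, he'x.symm⟩⟩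
          · have hze' : G.Adj z e' := by
              by_contra h
              exact he'S (hmemS.mpr
                ⟨ne_of_lt ((he'f.trans hfv).trans (hvd.trans (hdx.trans hxz))), h⟩)
            exact ihr e' (he'f.trans hfv)
              ⟨he'f.trans (hfv.trans hvd), Or.inr ⟨hze', he'y⟩⟩
      -- initial element for R
      by_cases heS : e ∈ S
      · exact hR e ⟨hed, Or.inl ⟨heS, hex'.symm⟩⟩
      · have hze : G.Adj z e := by
          by_contra h
          exact heS (hmemS.mpr ⟨ne_of_lt (hed.trans (hdx.trans hxz)), h⟩)
        exact hR e ⟨hed, Or.inr ⟨hze, heny⟩⟩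
    · -- Case y < x
      set Q : V → Prop := fun v =>
        (v ∈ S ∧ G.Adj x v) ∨
        (v ∈ Cs ∧ G.Adj v y ∧ ∃ t : V, t ∈ S ∧ t ∉ Cs ∧ G.Adj x t ∧ v < t) with hQdef
      have hQ : ∀ v : V, ¬ Q v := by
        intro v
        induction v using wf.induction with
        | _ v ihq =>
        intro hQv
        rcases hQv with ⟨hvS, hxv⟩ | ⟨hvC, hvy, t, htS, htnC, hxt, hvt⟩
        · -- Q1
          have hvnC : v ∉ Cs := fun h => hno v h hxv
          have hvney : v ≠ y := fun h => hvnC (h ▸ hyC)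
          have hvy : v < y := lt_of_le_of_ne (hymax hvS) hvney
          have hnvy : ¬ G.Adj v y := fun h => hvnC (hCadj hyC hvS h.symm)
          obtain ⟨e, hev, hey, henx⟩ := hlex x y v hvy hyx hxv.symm hnvy
          by_cases heS : e ∈ S
          · have heC : e ∈ Cs := hCadj hyC heS hey.symm
            exact ihq e hev (Or.inr ⟨heC, hey, v, hvS, hvnC, hxv, hev⟩)
          · have hze : G.Adj z e := by
              by_contra h
              exact heS (hmemS.mpr
                ⟨ne_of_lt (hev.trans (hvy.trans (hyx.trans hxz))), h⟩)
            obtain ⟨g, hge, hgx, hgz⟩ := hlex z x e (hev.trans (hvy.trans hyx)) hxz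
              hze.symm henx
            have hgS : g ∈ S := hmkS
              (hge.trans ((hev.trans (hvy.trans hyx)).trans hxz)) hgz
            exact ihq g (hge.trans hev) (Or.inl ⟨hgS, hgx.symm⟩)
        · -- Q2
          have htney : t ≠ y := fun h => htnC (h ▸ hyC)
          have hty : t < y := lt_of_le_of_ne (hymax htS) htney
          have hnvt : ¬ G.Adj v t := fun h => htnC (hCadj hvC htS h)
          obtain ⟨g, hgv, hgt, hgy⟩ := hlex y t v hvt hty hvy hnvt
          by_cases hgS : g ∈ S
          · have hgnC : g ∉ Cs := fun h => htnC (hCadj h htS hgt)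
            exact L g (Or.inl ⟨hgS, hgnC, v, t, hvC, htS, htnC, hgv, hvt, hgt⟩)
          · have hzg : G.Adj z g := by
              by_contra h
              exact hgS (hmemS.mpr
                ⟨ne_of_lt ((hgv.trans (hvt.trans hty)).trans hyz), h⟩)
            obtain ⟨f, hfg, hfy, hfz⟩ := hlex z y g (hgv.trans (hvt.trans hty)) hyz
              hzg.symm hgy
            have hfS : f ∈ S := hmkS
              ((hfg.trans (hgv.trans (hvt.trans hty))).trans hyz) hfz
            have hfC : f ∈ Cs := hCadj hyC hfS hfy.symm
            exact ihq f (hfg.trans hgv)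
              (Or.inr ⟨hfC, hfy, t, htS, htnC, hxt, (hfg.trans hgv).trans hvt⟩)
      exact hQ t0 (Or.inl ⟨ht0S, hxt0⟩)
  -- assemble the final statement
  refine ⟨(G.induce S).connectedComponentMk ⟨y, hyS⟩, ?_⟩
  intro x hzx
  by_cases hc : ∃ c ∈ Cs, G.Adj x c
  · right
    obtain ⟨c, hcC, hxc⟩ := hc
    obtain ⟨hcS, hreach⟩ := hcC
    exact ⟨⟨c, hcS⟩, SimpleGraph.ConnectedComponent.sound hreach, hxc⟩
  · left
    have hnoS : ¬ ∃ t ∈ S, G.Adj x t := fun h => hc (claimA x hzx h)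
    have hxz : x < z := lt_of_le_of_ne (hz x) (fun h => (G.ne_of_adj hzx) h.symm)
    ext w
    simp only [Set.mem_setOf_eq]
    constructor
    · rintro (rfl | hxw)
      · exact Or.inr hzx
      · rcases eq_or_ne w z with rfl | hwz
        · exact Or.inl rfl
        · refine Or.inr ?_
          by_contra h
          exact hnoS ⟨w, hmemS.mpr ⟨hwz, h⟩, hxw⟩
    · rintro (rfl | hzw)
      · exact Or.inr hzx.symm
      · rcases eq_or_ne w x with rfl | hwx
        · exact Or.inl rfl
        · refine Or.inr ?_
          by_contra hnxw
          have hwzlt : w < z := lt_of_le_of_ne (hz w) (fun h => (G.ne_of_adj hzw) h.symm)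
          rcases hwx.lt_or_gt with hlt | hlt
          · -- w < x
            obtain ⟨d, hd1, hd2, hd3⟩ := hlex z x w hlt hxz hzw.symm
              (fun h => hnxw h.symm)
            exact hnoS ⟨d, hmkS (hd1.trans (hlt.trans hxz)) hd3, hd2.symm⟩
          · -- x < w : infinite descent on S-neighbors of w below x
            obtain ⟨d0, hd01, hd02, hd03⟩ := hlex z w x hlt hwzlt hzx.symm hnxw
            have hDne : Set.Nonempty {d : V | d < x ∧ d ∈ S ∧ G.Adj d w} :=
              ⟨d0, hd01, hmkS (hd01.trans hxz) hd03, hd02⟩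
            obtain ⟨m, ⟨hmx, hmS, hmw⟩, hmin⟩ := wf.has_min _ hDne
            have hnmx : ¬ G.Adj m x := fun h => hnoS ⟨m, hmS, h.symm⟩
            obtain ⟨e, he1, he2, he3⟩ := hlex w x m hmx hlt hmw hnmx
            have heS : e ∉ S := fun h => hnoS ⟨e, h, he2.symm⟩
            have hze : G.Adj z e := by
              by_contra h
              exact heS (hmemS.mpr ⟨ne_of_lt ((he1.trans hmx).trans hxz), h⟩)
            obtain ⟨f, hf1, hf2, hf3⟩ := hlex z w e ((he1.trans hmx).trans hlt) hwzlt
              hze.symm he3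
            have hfS : f ∈ S := hmkS ((hf1.trans ((he1.trans hmx).trans hlt)).trans hwzlt) hf3
            exact hmin f ⟨(hf1.trans he1).trans hmx, hfS, hf2⟩ (hf1.trans he1)
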